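/- Let A be a (not necessarily unital) associative algebra over a field F satisfying the identity a_1⋯a_n = q · a_{σ(1)}⋯a_{σ(n)} for some scalar q ∈ F with q ≠ 1 and some permutation σ ∈ S_n. Then A is nilpotent: there exists N such that any product of N elements of A is zero. -/

import Mathlib

/-- Product of a nonempty list in a (non-unital) multiplicative structure;
junk value `0` for the empty list. -/
def listMul {A : Type*} [Mul A] [Zero A] : List A → A
  | [] => 0
  | [x] => x
  | x :: y :: l => x * listMul (y :: l)

/-- The product `a 0 * a 1 * ⋯ * a (k-1)`. -/
def finProd {A : Type*} [Mul A] [Zero A] {k : ℕ} (a : Fin k → A) : A :=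
  listMul (List.ofFn a)

section Aux

variable {F A : Type*} [Field F] [NonUnitalRing A] [Module F A]
    [SMulCommClass F A A] [IsScalarTower F A A]

lemma listMul_cons (x : A) (l : List A) (hl : l ≠ []) :
    listMul (x :: l) = x * listMul l := by
  cases l with
  | nil => exact absurd rfl hl
  | cons y t => rfl

lemma listMul_append (x y : List A) (hx : x ≠ []) (hy : y ≠ []) :
    listMul (x ++ y) = listMul x * listMul y := by
  induction x with
  | nil => exact absurd rfl hx
  | cons a t ih =>
    cases t with
    | nil =>
      simp only [List.cons_append, List.nil_append]
      rw [listMul_cons a y hy]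
      rfl
    | cons b t2 =>
      rw [List.cons_append, listMul_cons a ((b :: t2) ++ y) (by simp),
        ih (by simp), listMul_cons a (b :: t2) (by simp), mul_assoc]

lemma listMul_context {X Y : List A} (h : listMul X = listMul Y)
    (hX : X ≠ []) (hY : Y ≠ []) (l r : List A) :
    listMul (l ++ X ++ r) = listMul (l ++ Y ++ r) := by
  rcases eq_or_ne l [] with rfl | hl
  · rcases eq_or_ne r [] with rfl | hr
    · simpa using h
    · simp only [List.nil_append]
      rw [listMul_append X r hX hr, listMul_append Y r hY hr, h]
  · rcases eq_or_ne r [] with rfl | hr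
    · simp only [List.append_nil]
      rw [listMul_append l X hl hX, listMul_append l Y hl hY, h]
    · rw [List.append_assoc, List.append_assoc,
        listMul_append l (X ++ r) hl (by simp [hX]),
        listMul_append l (Y ++ r) hl (by simp [hY]),
        listMul_append X r hX hr, listMul_append Y r hY hr, h]

lemma listMul_context_smul {q : F} {X Y : List A} (h : listMul X = q • listMul Y)
    (hX : X ≠ []) (hY : Y ≠ []) (l r : List A) :
    listMul (l ++ X ++ r) = q • listMul (l ++ Y ++ r) := by
  rcases eq_or_ne l [] with rfl | hl
  · rcases eq_or_ne r [] with rfl | hr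
    · simpa using h
    · simp only [List.nil_append]
      rw [listMul_append X r hX hr, listMul_append Y r hY hr, h, smul_mul_assoc]
  · rcases eq_or_ne r [] with rfl | hr
    · simp only [List.append_nil]
      rw [listMul_append l X hl hX, listMul_append l Y hl hY, h, mul_smul_comm]
    · rw [List.append_assoc, List.append_assoc,
        listMul_append l (X ++ r) hl (by simp [hX]),
        listMul_append l (Y ++ r) hl (by simp [hY]),
        listMul_append X r hX hr, listMul_append Y r hY hr, h, smul_mul_assoc,
        mul_smul_comm]

lemma flatten_ofFn_ne_nil {k : ℕ} (g : Fin (k + 1) → List A) (hg : ∀ i, g i ≠ []) :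
    (List.ofFn g).flatten ≠ [] := by
  rw [List.ofFn_succ, List.flatten_cons]
  intro h
  rcases List.append_eq_nil_iff.mp h with ⟨h1, _⟩
  exact hg 0 h1

lemma finProd_blocks {k : ℕ} (g : Fin k → List A) (hg : ∀ i, g i ≠ []) :
    finProd (fun i => listMul (g i)) = listMul (List.ofFn g).flatten := by
  induction k with
  | zero => simp [finProd, listMul]
  | succ m ih =>
    rcases Nat.eq_zero_or_pos m with rfl | hm
    · have h0 : (List.ofFn g).flatten = g 0 := by
        simp [List.ofFn_succ]
      rw [h0]
      simp only [finProd, List.ofFn_succ, List.ofFn_zero]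
      rfl
    · obtain ⟨m', rfl⟩ := Nat.exists_eq_succ_of_ne_zero hm.ne'
      have hne : (List.ofFn fun i : Fin (m' + 1) => g i.succ).flatten ≠ [] :=
        flatten_ofFn_ne_nil _ (fun i => hg i.succ)
      have h1 : finProd (fun i => listMul (g i)) =
          listMul (g 0) * finProd (fun i : Fin (m' + 1) => listMul (g i.succ)) := by
        unfold finProd
        rw [List.ofFn_succ (f := fun i => listMul (g i)),
          listMul_cons _ _ (by simp)]
      rw [h1, ih (fun i => g i.succ) (fun i => hg i.succ),
        List.ofFn_succ (f := g), List.flatten_cons,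
        listMul_append _ _ (hg 0) hne]

/-- flatten of singleton blocks. -/
lemma flatten_singletons {k : ℕ} (f : Fin k → A) :
    (List.ofFn (fun i => [f i])).flatten = List.ofFn f := by
  induction k with
  | zero => simp
  | succ m ih =>
    rw [List.ofFn_succ, List.flatten_cons, List.ofFn_succ (f := f), ih]
    rfl

/-- flatten where one slot is replaced by a block `B`, others singletons. -/
lemma flatten_one_block {k : ℕ} (w : Fin k → A) (u : Fin k) (B : List A) :
    (List.ofFn (fun i => if i = u then B else [w i])).flatten
      = (List.ofFn w).take u.val ++ B ++ (List.ofFn w).drop (u.val + 1) := by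
  induction k with
  | zero => exact u.elim0
  | succ m ih =>
    rcases Fin.eq_zero_or_eq_succ u with rfl | ⟨j, rfl⟩
    · rw [List.ofFn_succ (f := fun i => if i = (0 : Fin (m+1)) then B else [w i]),
        List.flatten_cons]
      have ht : (fun i : Fin m => if i.succ = (0 : Fin (m+1)) then B else [w i.succ])
          = fun i : Fin m => [w i.succ] := by
        funext i
        rw [if_neg (Fin.succ_ne_zero i)]
      rw [ht, flatten_singletons, if_pos rfl, List.ofFn_succ (f := w)]
      simp
    · rw [List.ofFn_succ (f := fun i => if i = j.succ then B else [w i]),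
        List.flatten_cons]
      have h0 : (if (0 : Fin (m+1)) = j.succ then B else [w 0]) = [w 0] :=
        if_neg (Fin.succ_ne_zero j).symm
      have ht : (fun i : Fin m => if i.succ = j.succ then B else [w i.succ])
          = fun i : Fin m => if i = j then B else [w i.succ] := by
        funext i
        simp [Fin.succ_inj]
      rw [h0, ht, ih (fun i => w i.succ) j, List.ofFn_succ (f := w)]
      have hval : (j.succ : Fin (m+1)).val = j.val + 1 := rfl
      rw [hval]
      simp [List.take_succ_cons, List.drop_succ_cons]

/-- flatten invariance when two adjacent slots are regrouped. -/
lemma flatten_adj {k : ℕ} (h h' : Fin k → List A) (t : ℕ) (ht : t + 1 < k)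
    (hoth : ∀ i : Fin k, i.val ≠ t → i.val ≠ t + 1 → h i = h' i)
    (hpair : h ⟨t, by omega⟩ ++ h ⟨t + 1, ht⟩ = h' ⟨t, by omega⟩ ++ h' ⟨t + 1, ht⟩) :
    (List.ofFn h).flatten = (List.ofFn h').flatten := by
  induction t generalizing k with
  | zero =>
    obtain ⟨m, rfl⟩ := Nat.exists_eq_succ_of_ne_zero (by omega : k ≠ 0)
    obtain ⟨m', rfl⟩ := Nat.exists_eq_succ_of_ne_zero (by omega : m ≠ 0)
    rw [List.ofFn_succ (f := h), List.ofFn_succ (f := h'),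
      List.ofFn_succ (f := fun i : Fin (m' + 1) => h i.succ),
      List.ofFn_succ (f := fun i : Fin (m' + 1) => h' i.succ)]
    simp only [List.flatten_cons]
    have htail : (fun i : Fin m' => h i.succ.succ) = fun i : Fin m' => h' i.succ.succ := by
      funext i
      exact hoth i.succ.succ (by simp [Fin.val_succ]) (by simp [Fin.val_succ])
    rw [htail, ← List.append_assoc, ← List.append_assoc]
    congr 1
  | succ s ihs =>
    obtain ⟨m, rfl⟩ := Nat.exists_eq_succ_of_ne_zero (by omega : k ≠ 0)
    rw [List.ofFn_succ (f := h), List.ofFn_succ (f := h')]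
    simp only [List.flatten_cons]
    have h0 : h 0 = h' 0 := hoth 0 (by simp) (by simp)
    rw [h0]
    congr 1
    refine ihs (fun i => h i.succ) (fun i => h' i.succ) (by omega) ?_ ?_
    · intro i hi1 hi2
      exact hoth i.succ (by simp [Fin.val_succ, hi1]) (by simp [Fin.val_succ]; omega)
    · have e1 : (⟨s, by omega⟩ : Fin m).succ = ⟨s + 1, by omega⟩ := rfl
      have e2 : (⟨s + 1, by omega⟩ : Fin m).succ = ⟨s + 2, by omega⟩ := rfl
      simpa [e1, e2] using hpair

end Aux

section Main

variable {F A : Type*} [Field F] [NonUnitalRing A] [Module F A]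
    [SMulCommClass F A A] [IsScalarTower F A A]
    {n : ℕ} {q : F} {σ : Equiv.Perm (Fin n)}

lemma key (hid : ∀ a : Fin n → A, finProd a = q • finProd (fun i => a (σ i)))
    (g : Fin n → List A) (hg : ∀ i, g i ≠ []) :
    listMul (List.ofFn g).flatten
      = q • listMul (List.ofFn (fun i => g (σ i))).flatten := by
  rw [← finProd_blocks g hg, ← finProd_blocks (fun i => g (σ i)) (fun i => hg _)]
  exact hid (fun i => listMul (g i))

lemma core (hid : ∀ a : Fin n → A, finProd a = q • finProd (fun i => a (σ i)))
    {t : ℕ} (ht : t + 1 < n) (W : List A) (hW : W.length = n)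
    (Aa : List A) (hA : Aa ≠ []) :
    listMul (W.take ((σ ⟨t, by omega⟩).val + 1) ++ Aa ++ W.drop ((σ ⟨t, by omega⟩).val + 1))
      = listMul (W.take (σ ⟨t + 1, ht⟩).val ++ Aa ++ W.drop (σ ⟨t + 1, ht⟩).val) := by
  set u : Fin n := σ ⟨t, by omega⟩ with hu
  set v : Fin n := σ ⟨t + 1, ht⟩ with hv
  have huv : u ≠ v := by
    intro h
    have := σ.injective h
    simp only [Fin.mk.injEq] at this
    omega
  set w : Fin n → A := fun i => W[i.val]'(by omega) with hw
  have hofn : List.ofFn w = W := by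
    apply List.ext_getElem
    · simp [hW]
    · intro i h1 h2
      simp [hw]
  set g : Fin n → List A := fun i => if i = u then [w u] ++ Aa else [w i] with hg
  set g' : Fin n → List A := fun i => if i = v then Aa ++ [w v] else [w i] with hg'
  have hgne : ∀ i, g i ≠ [] := by
    intro i
    simp only [hg]
    split <;> simp
  have hg'ne : ∀ i, g' i ≠ [] := by
    intro i
    simp only [hg']
    split <;> simp [hA]
  have hfg : (List.ofFn g).flatten = W.take (u.val + 1) ++ Aa ++ W.drop (u.val + 1) := by
    rw [hg]
    rw [flatten_one_block w u ([w u] ++ Aa), hofn]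
    have : W.take u.val ++ [w u] = W.take (u.val + 1) := by
      simpa [hw] using List.take_concat_get' W u.val (by omega)
    rw [← this]
    simp [List.append_assoc]
  have hfg' : (List.ofFn g').flatten = W.take v.val ++ Aa ++ W.drop v.val := by
    rw [hg']
    rw [flatten_one_block w v (Aa ++ [w v]), hofn]
    have : [w v] ++ W.drop (v.val + 1) = W.drop v.val := by
      have hvlt : v.val < W.length := by omega
      rw [List.drop_eq_getElem_cons (i := v.val) (l := W) hvlt]
      simp [hw]
    rw [← this]
    simp [List.append_assoc]
  have hpost : (List.ofFn (fun i => g (σ i))).flatten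
      = (List.ofFn (fun i => g' (σ i))).flatten := by
    apply flatten_adj _ _ t ht
    · intro i hi1 hi2
      have hne1 : σ i ≠ u := by
        intro h
        have := σ.injective h
        apply hi1
        rw [this]
      have hne2 : σ i ≠ v := by
        intro h
        have := σ.injective h
        apply hi2
        rw [this]
      simp only [hg, hg', if_neg hne1, if_neg hne2]
    · show g u ++ g v = g' u ++ g' v
      simp only [hg, hg', if_pos rfl, if_neg huv, if_neg (Ne.symm huv)]
      simp [List.append_assoc]
  rw [← hfg, ← hfg', key hid g hgne, key hid g' hg'ne, hpost]

lemma hop {p₁ p₂ : ℕ}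
    (hcore : ∀ W : List A, W.length = n → ∀ Aa : List A, Aa ≠ [] →
      listMul (W.take p₁ ++ Aa ++ W.drop p₁) = listMul (W.take p₂ ++ Aa ++ W.drop p₂))
    (hlt : p₂ < p₁) (hp₁ : p₁ ≤ n)
    (L R D Aa : List A) (hL : n ≤ L.length) (hR : n ≤ R.length)
    (hD : D.length = p₁ - p₂) (hA : Aa ≠ []) :
    listMul (L ++ Aa ++ D ++ R) = listMul (L ++ D ++ Aa ++ R) := by
  set L' : List A := L.take (L.length - p₂) with hL'
  set W₁ : List A := L.drop (L.length - p₂) with hW₁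
  set W₂ : List A := R.take (n - p₁) with hW₂
  set R' : List A := R.drop (n - p₁) with hR'
  have hW₁len : W₁.length = p₂ := by simp [hW₁]; omega
  have hW₂len : W₂.length = n - p₁ := by simp [hW₂]; omega
  have hLsplit : L = L' ++ W₁ := (List.take_append_drop _ L).symm
  have hRsplit : R = W₂ ++ R' := (List.take_append_drop _ R).symm
  set W : List A := W₁ ++ D ++ W₂ with hWdef
  have hWlen : W.length = n := by simp [hWdef, hW₁len, hW₂len, hD]; omega
  have h1 : W.take p₂ = W₁ := by
    rw [hWdef, List.append_assoc]
    exact List.take_left' hW₁len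
  have h2 : W.drop p₂ = D ++ W₂ := by
    rw [hWdef, List.append_assoc]
    exact List.drop_left' hW₁len
  have h3 : W.take p₁ = W₁ ++ D := by
    rw [hWdef]
    exact List.take_left' (by simp [hW₁len, hD]; omega)
  have h4 : W.drop p₁ = W₂ := by
    rw [hWdef]
    exact List.drop_left' (by simp [hW₁len, hD]; omega)
  have hc := hcore W hWlen Aa hA
  rw [h1, h2, h3, h4] at hc
  have e1 : L ++ Aa ++ D ++ R = L' ++ (W₁ ++ Aa ++ (D ++ W₂)) ++ R' := by
    conv_lhs => rw [hLsplit, hRsplit]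
    simp [List.append_assoc]
  have e2 : L ++ D ++ Aa ++ R = L' ++ (W₁ ++ D ++ Aa ++ W₂) ++ R' := by
    conv_lhs => rw [hLsplit, hRsplit]
    simp [List.append_assoc]
  rw [e1, e2]
  apply listMul_context
  · exact hc.symm
  · simp [hA]
  · simp [hA]

lemma swapc {c : ℕ}
    (hhop : ∀ L R D Aa : List A, n ≤ L.length → n ≤ R.length → D.length = c → Aa ≠ [] →
      listMul (L ++ Aa ++ D ++ R) = listMul (L ++ D ++ Aa ++ R))
    (k : ℕ) :
    ∀ L R B Aa : List A, n ≤ L.length → n ≤ R.length → B.length = k * c → Aa ≠ [] →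
      listMul (L ++ Aa ++ B ++ R) = listMul (L ++ B ++ Aa ++ R) := by
  induction k with
  | zero =>
    intro L R B Aa hL hR hB hA
    have : B = [] := List.length_eq_zero_iff.mp (by omega)
    subst this
    simp
  | succ m ih =>
    intro L R B Aa hL hR hB hA
    rcases Nat.eq_zero_or_pos c with rfl | hc
    · have : B = [] := List.length_eq_zero_iff.mp (by omega)
      subst this
      simp
    set D : List A := B.take c with hD
    set B' : List A := B.drop c with hB'
    have hDlen : D.length = c := by simp [hD]; nlinarith [hB]
    have hB'len : B'.length = m * c := by simp [hB']; rw [hB]; ring_nf; omega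
    have hBsplit : B = D ++ B' := (List.take_append_drop _ B).symm
    have e1 : L ++ Aa ++ B ++ R = L ++ Aa ++ D ++ (B' ++ R) := by
      rw [hBsplit]; simp [List.append_assoc]
    have e2 : L ++ D ++ Aa ++ (B' ++ R) = (L ++ D) ++ Aa ++ B' ++ R := by
      simp [List.append_assoc]
    have e3 : (L ++ D) ++ B' ++ Aa ++ R = L ++ B ++ Aa ++ R := by
      rw [hBsplit]; simp [List.append_assoc]
    rw [e1, hhop L (B' ++ R) D Aa hL (by simp; omega) hDlen hA, e2,
      ih (L ++ D) R B' Aa (by simp; omega) hR hB'len hA, e3]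

lemma sortperm {c : ℕ} (hc : 0 < c)
    (hswap : ∀ L R B Aa : List A, n ≤ L.length → n ≤ R.length → B.length = c → Aa ≠ [] →
      listMul (L ++ Aa ++ B ++ R) = listMul (L ++ B ++ Aa ++ R))
    {l₁ l₂ : List (List A)} (hperm : l₁.Perm l₂) :
    (∀ x ∈ l₁, x.length = c) → ∀ L R : List A, n ≤ L.length → n ≤ R.length →
      listMul (L ++ l₁.flatten ++ R) = listMul (L ++ l₂.flatten ++ R) := by
  induction hperm with
  | nil => intro _ L R _ _; rfl
  | cons x h ih =>
    intro hall L R hL hR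
    have e : ∀ (ll : List (List A)), L ++ (x :: ll).flatten ++ R
        = (L ++ x) ++ ll.flatten ++ R := by
      intro ll; simp [List.append_assoc]
    rw [e, e]
    exact ih (fun y hy => hall y (List.mem_cons_of_mem _ hy)) (L ++ x) R
      (by simp; omega) hR
  | swap x y l =>
    intro hall L R hL hR
    have hx : x.length = c := hall x (by simp)
    have hy : y.length = c := hall y (by simp)
    have e1 : L ++ (y :: x :: l).flatten ++ R = L ++ y ++ x ++ (l.flatten ++ R) := by
      simp [List.append_assoc]
    have e2 : L ++ (x :: y :: l).flatten ++ R = L ++ x ++ y ++ (l.flatten ++ R) := by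
      simp [List.append_assoc]
    rw [e1, e2]
    exact hswap L (l.flatten ++ R) x y hL (by simp; omega) hx
      (by intro h; rw [h] at hy; simp at hy; omega)
  | trans h1 h2 ih1 ih2 =>
    intro hall L R hL hR
    rw [ih1 hall L R hL hR, ih2 (fun y hy => hall y (h1.symm.subset hy)) L R hL hR]

lemma chunk_flatten (c : ℕ) : ∀ (k : ℕ) (J : List A), J.length = k * c →
    (List.ofFn (fun i : Fin k => (J.drop (i.val * c)).take c)).flatten = J := by
  intro k
  induction k with
  | zero =>
    intro J hJ
    simp only [List.ofFn_zero, List.flatten_nil]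
    exact (List.length_eq_zero_iff.mp (by omega)).symm
  | succ m ih =>
    intro J hJ
    rw [List.ofFn_succ, List.flatten_cons]
    have htail : (fun i : Fin m => (J.drop ((i.succ : Fin (m+1)).val * c)).take c)
        = fun i : Fin m => (((J.drop c).drop (i.val * c))).take c := by
      funext i
      rw [List.drop_drop]
      congr 2
      have : (i.succ : Fin (m+1)).val = i.val + 1 := rfl
      rw [this]
      ring
    rw [htail, ih (J.drop c) (by simp [hJ]; ring_nf; omega)]
    simp

end Main

section Final

variable {F A : Type*} [Field F] [NonUnitalRing A] [Module F A]
    [SMulCommClass F A A] [IsScalarTower F A A]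

lemma smul_cancel {q : F} (hq : q ≠ 1) {x : A} (h : x = q • x) : x = 0 := by
  have h3 : (1 : F) - q ≠ 0 := sub_ne_zero.mpr (Ne.symm hq)
  have h2 : ((1 : F) - q) • x = 0 := by
    rw [sub_smul, one_smul, ← h, sub_self]
  calc x = ((1 : F)) • x := (one_smul F x).symm
    _ = (((1 : F) - q)⁻¹ * ((1 : F) - q)) • x := by rw [inv_mul_cancel₀ h3]
    _ = ((1 : F) - q)⁻¹ • (((1 : F) - q) • x) := by rw [mul_smul]
    _ = 0 := by rw [h2, smul_zero]

lemma flatten_ofFn_ne_nil' {k : ℕ} (hk : 0 < k) (g : Fin k → List A)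
    (hg : ∀ i, g i ≠ []) : (List.ofFn g).flatten ≠ [] := by
  obtain ⟨m, rfl⟩ := Nat.exists_eq_succ_of_ne_zero hk.ne'
  exact flatten_ofFn_ne_nil g hg

lemma sigma_eq_one {n : ℕ} (σ : Equiv.Perm (Fin n))
    (h : ∀ t (ht : t + 1 < n), (σ ⟨t + 1, ht⟩).val = (σ ⟨t, by omega⟩).val + 1) :
    σ = 1 := by
  rcases Nat.eq_zero_or_pos n with rfl | hn
  · ext i; exact i.elim0
  have hstep : ∀ i (hi : i < n), (σ ⟨i, hi⟩).val = (σ ⟨0, hn⟩).val + i := by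
    intro i
    induction i with
    | zero => intro hi; rfl
    | succ j ihj =>
      intro hi
      rw [h j hi, ihj (by omega)]
      omega
  have h0 : (σ ⟨0, hn⟩).val = 0 := by
    have := hstep (n - 1) (by omega)
    have hlt := (σ ⟨n - 1, by omega⟩).isLt
    omega
  ext i
  have hi := i.isLt
  have := hstep i.val hi
  rw [h0] at this
  simpa using this

theorem q_identity_nilpotent' {F A : Type*} [Field F] [NonUnitalRing A] [Module F A]
    [SMulCommClass F A A] [IsScalarTower F A A]
    (n : ℕ) (hn : 0 < n) (q : F) (hq : q ≠ 1) (σ : Equiv.Perm (Fin n))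
    (hid : ∀ a : Fin n → A, finProd a = q • finProd (fun i => a (σ i))) :
    ∃ N : ℕ, 0 < N ∧ ∀ a : Fin N → A, finProd a = 0 := by
  by_cases hσ : σ = 1
  · refine ⟨n, hn, fun a => ?_⟩
    apply smul_cancel hq
    have := hid a
    simpa [hσ] using this
  · -- find a position where σ is not a shift-by-one
    have hex : ∃ t, ∃ (ht : t + 1 < n),
        (σ ⟨t + 1, ht⟩).val ≠ (σ ⟨t, by omega⟩).val + 1 := by
      by_contra hcon
      push_neg at hcon
      exact hσ (sigma_eq_one σ (fun t ht => hcon t ht))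
    obtain ⟨t, ht, hvne⟩ := hex
    have hn2 : 2 ≤ n := by omega
    set u : ℕ := (σ ⟨t, by omega⟩).val with hu
    set v : ℕ := (σ ⟨t + 1, ht⟩).val with hv
    have hult : u < n := (σ ⟨t, by omega⟩).isLt
    have hvlt : v < n := (σ ⟨t + 1, ht⟩).isLt
    have hcore : ∀ W : List A, W.length = n → ∀ Aa : List A, Aa ≠ [] →
        listMul (W.take (u + 1) ++ Aa ++ W.drop (u + 1))
          = listMul (W.take v ++ Aa ++ W.drop v) :=
      fun W hW Aa hA => core hid ht W hW Aa hA
    have hne : u + 1 ≠ v := fun h => hvne h.symm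
    -- obtain the hop rule with some positive c
    obtain ⟨c, hc, hhop⟩ : ∃ c, 0 < c ∧ ∀ L R D Aa : List A,
        n ≤ L.length → n ≤ R.length → D.length = c → Aa ≠ [] →
        listMul (L ++ Aa ++ D ++ R) = listMul (L ++ D ++ Aa ++ R) := by
      rcases lt_or_gt_of_ne hne with hlt | hlt
      · exact ⟨v - (u + 1), by omega,
          fun L R D Aa hL hR hD hA =>
            hop (fun W hW Aa hA => (hcore W hW Aa hA).symm) hlt (by omega)
              L R D Aa hL hR hD hA⟩
      · exact ⟨(u + 1) - v, by omega,
          fun L R D Aa hL hR hD hA =>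
            hop hcore hlt (by omega) L R D Aa hL hR hD hA⟩
    have hswap : ∀ L R B Aa : List A, n ≤ L.length → n ≤ R.length →
        B.length = c → Aa ≠ [] →
        listMul (L ++ Aa ++ B ++ R) = listMul (L ++ B ++ Aa ++ R) := by
      intro L R B Aa hL hR hB hA
      exact swapc hhop 1 L R B Aa hL hR (by omega) hA
    refine ⟨n + n * c + n, by omega, fun a => ?_⟩
    set W : List A := List.ofFn a with hW
    have hWlen : W.length = n + n * c + n := by simp [hW]
    set Λ : List A := W.take n with hΛ
    set T : List A := W.drop n with hT
    set M : List A := T.take (n * c) with hM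
    set Ρ : List A := T.drop (n * c) with hΡ
    have hΛlen : Λ.length = n := by simp [hΛ, hWlen]
    have hTlen : T.length = n * c + n := by simp [hT, hWlen]; omega
    have hMlen : M.length = n * c := by simp [hM, hTlen]
    have hΡlen : Ρ.length = n := by simp [hΡ, hTlen]
    have hsplit : W = Λ ++ M ++ Ρ := by
      rw [List.append_assoc, hΛ, hM, hΡ, List.take_append_drop, hT,
        List.take_append_drop]
    set bl : Fin n → List A := fun i => (M.drop (i.val * c)).take c with hbl
    have hblLen : ∀ i, (bl i).length = c := by
      intro i
      have hi := i.isLt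
      have hmul : (i.val + 1) * c ≤ n * c := Nat.mul_le_mul_right c (by omega)
      have hexp : (i.val + 1) * c = i.val * c + c := by ring
      simp only [hbl, List.length_take, List.length_drop, hMlen]
      omega
    have hblne : ∀ i, bl i ≠ [] := by
      intro i h
      have := hblLen i
      rw [h] at this
      simp at this
      omega
    have hMflat : (List.ofFn bl).flatten = M := chunk_flatten c n M hMlen
    have hkey : listMul M = q • listMul (List.ofFn (fun i => bl (σ i))).flatten := by
      rw [← hMflat]
      exact key hid bl hblne
    have hJ'ne : (List.ofFn (fun i => bl (σ i))).flatten ≠ [] :=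
      flatten_ofFn_ne_nil' (by omega) _ (fun i => hblne (σ i))
    have hMne : M ≠ [] := by
      intro h
      rw [h] at hMlen
      simp at hMlen
      rcases hMlen with h1 | h1 <;> omega
    have hperm : (List.ofFn (fun i => bl (σ i))).Perm (List.ofFn bl) :=
      σ.ofFn_comp_perm bl
    have hsort : listMul (Λ ++ (List.ofFn (fun i => bl (σ i))).flatten ++ Ρ)
        = listMul (Λ ++ M ++ Ρ) := by
      have := sortperm hc hswap hperm
        (by
          intro x hx
          rw [List.mem_ofFn] at hx
          obtain ⟨j, rfl⟩ := hx
          exact hblLen (σ j))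
        Λ Ρ (by omega) (by omega)
      rw [hMflat] at this
      exact this
    have hmain : listMul W = q • listMul W := by
      conv_lhs => rw [hsplit]
      rw [listMul_context_smul hkey hMne hJ'ne Λ Ρ, hsort, ← hsplit]
    have hzero : listMul W = 0 := smul_cancel hq hmain
    simpa [finProd, hW] using hzero

end Final

theorem q_identity_nilpotent {F A : Type*} [Field F] [NonUnitalRing A] [Module F A]
    [SMulCommClass F A A] [IsScalarTower F A A]
    (n : ℕ) (hn : 0 < n) (q : F) (hq : q ≠ 1) (σ : Equiv.Perm (Fin n))
    (hid : ∀ a : Fin n → A, finProd a = q • finProd (fun i => a (σ i))) :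
    ∃ N : ℕ, 0 < N ∧ ∀ a : Fin N → A, finProd a = 0 :=
  q_identity_nilpotent' n hn q hq σ hid
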